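/- For any solution (a,b) of the invariant Spin(7) instanton system with a(0) = 0, b(0) = 1 and a ≥ 0, the inequality b(t) > t·a(t)/(2√(t²+1)) persists: if b(t*) = t*·a(t*)/(2√(t*²+1)) at some t* > 0, then d/dt[b(t) - t·a(t)/(2√(t²+1))] at t = t* equals √6·(b(t*)²t*² + b(t*)² + 1)/(t*√(2t*²+2)√(2t*²+3)) > 0. -/
import Mathlib


/-- Metric coefficient `P(t) = √6·√(2t²+2)/√(2t²+3)`. -/
noncomputable def Pfun (t : ℝ) : ℝ := Real.sqrt 6 * Real.sqrt (2 * t ^ 2 + 2) / Real.sqrt (2 * t ^ 2 + 3)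

/-- Metric coefficient `Q(t) = t/(t²+1)`. -/
noncomputable def Qfun (t : ℝ) : ℝ := t / (t ^ 2 + 1)

/-- `(a,b)` solves the invariant Spin(7) instanton system on the set `s`. -/
def SolvesSpin7 (a b : ℝ → ℝ) (s : Set ℝ) : Prop :=
  ∀ t ∈ s,
    HasDerivAt a (Pfun t * a t / t * (b t - 1 / Pfun t)) t ∧
    HasDerivAt b
      (Pfun t / (2 * t) * (1 - (b t) ^ 2) - Pfun t * Qfun t / 2 * (1 - (a t) ^ 2) - Qfun t * b t) t

lemma spin7_key_algebra (t B A s q r c : ℝ) (ht : 0 < t) (hs : 0 < s) (hq : 0 < q)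
    (hr : 0 < r) (hc : 0 < c) (hs2 : s ^ 2 = t ^ 2 + 1) (hq2 : q ^ 2 = 2 * t ^ 2 + 2)
    (hr2 : r ^ 2 = 2 * t ^ 2 + 3) (hc2 : c ^ 2 = 6) (hA : A = 2 * s * B / t) :
    (c * q / r / (2 * t) * (1 - B ^ 2) - (c * q / r) * (t / (t ^ 2 + 1)) / 2 * (1 - A ^ 2)
        - (t / (t ^ 2 + 1)) * B)
      - ((1 * A + t * ((c * q / r) * A / t * (B - 1 / (c * q / r)))) * (2 * s)
          - t * A * (2 * (2 * t / (2 * s)))) / (2 * s) ^ 2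
    = c * (B ^ 2 * t ^ 2 + B ^ 2 + 1) / (t * q * r) := by
  have hq2' : q ^ 2 = 2 * s ^ 2 := by rw [hq2, hs2]; ring
  have ht1 : t ^ 2 + 1 = s ^ 2 := hs2.symm
  have hcq : c * q ≠ 0 := by positivity
  have step1 :
      (c * q / r / (2 * t) * (1 - B ^ 2) - (c * q / r) * (t / (t ^ 2 + 1)) / 2 * (1 - A ^ 2)
        - (t / (t ^ 2 + 1)) * B)
      - ((1 * A + t * ((c * q / r) * A / t * (B - 1 / (c * q / r)))) * (2 * s)
          - t * A * (2 * (2 * t / (2 * s)))) / (2 * s) ^ 2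
      = c * q * (s ^ 2 + s ^ 2 * B ^ 2 - t ^ 2) / (2 * r * t * s ^ 2) := by
    rw [ht1, hA]
    field_simp
    ring
  rw [step1]
  have hX : s ^ 2 + s ^ 2 * B ^ 2 - t ^ 2 = B ^ 2 * t ^ 2 + B ^ 2 + 1 := by
    rw [hs2]; ring
  rw [hX]
  rw [div_eq_div_iff (by positivity) (by positivity)]
  linear_combination (c * (B ^ 2 * t ^ 2 + B ^ 2 + 1) * r * t) * hq2'

/-- Persistence of the a priori bound `b > t·a/(2√(t²+1))`: at any time `t* > 0` where equality
`b(t*) = t*·a(t*)/(2√(t*²+1))` holds, the derivative of the difference equals the explicitly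
positive quantity `√6·(b²t² + b² + 1)/(t√(2t²+2)√(2t²+3))`. -/
theorem spin7_apriori_bound_persists (a b : ℝ → ℝ) (l u tstar D : ℝ)
    (hl : 0 ≤ l) (hsol : SolvesSpin7 a b (Set.Ioo l u))
    (htstar : tstar ∈ Set.Ioo l u)
    (ha0 : a 0 = 0) (hb0 : b 0 = 1) (hapos : ∀ t, 0 ≤ a t)
    (heq : b tstar = tstar * a tstar / (2 * Real.sqrt (tstar ^ 2 + 1)))
    (hD : HasDerivAt (fun t => b t - t * a t / (2 * Real.sqrt (t ^ 2 + 1))) D tstar) :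
    D = Real.sqrt 6 * ((b tstar) ^ 2 * tstar ^ 2 + (b tstar) ^ 2 + 1) /
        (tstar * Real.sqrt (2 * tstar ^ 2 + 2) * Real.sqrt (2 * tstar ^ 2 + 3)) ∧
    0 < D := by
  set t := tstar with htdef
  have ht : 0 < t := lt_of_le_of_lt hl htstar.1
  obtain ⟨hda, hdb⟩ := hsol t htstar
  set s := Real.sqrt (t ^ 2 + 1) with hsdef
  have hs : 0 < s := Real.sqrt_pos.mpr (by positivity)
  have hs2 : s ^ 2 = t ^ 2 + 1 := Real.sq_sqrt (by positivity)
  set q := Real.sqrt (2 * t ^ 2 + 2) with hqdef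
  have hq : 0 < q := Real.sqrt_pos.mpr (by positivity)
  have hq2 : q ^ 2 = 2 * t ^ 2 + 2 := Real.sq_sqrt (by positivity)
  set r := Real.sqrt (2 * t ^ 2 + 3) with hrdef
  have hr : 0 < r := Real.sqrt_pos.mpr (by positivity)
  have hr2 : r ^ 2 = 2 * t ^ 2 + 3 := Real.sq_sqrt (by positivity)
  set c := Real.sqrt 6 with hcdef
  have hc : 0 < c := Real.sqrt_pos.mpr (by norm_num)
  have hc2 : c ^ 2 = 6 := Real.sq_sqrt (by norm_num)
  -- derivative of the subtracted term
  have h1 : HasDerivAt (fun x : ℝ => x ^ 2 + 1) (2 * t) t := by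
    simpa using ((hasDerivAt_pow 2 t).add_const 1)
  have h2 : HasDerivAt (fun x : ℝ => Real.sqrt (x ^ 2 + 1)) (2 * t / (2 * s)) t :=
    h1.sqrt (by positivity)
  have h3 : HasDerivAt (fun x : ℝ => 2 * Real.sqrt (x ^ 2 + 1)) (2 * (2 * t / (2 * s))) t :=
    h2.const_mul 2
  have h4 : HasDerivAt (fun x : ℝ => x * a x)
      (1 * a t + t * (Pfun t * a t / t * (b t - 1 / Pfun t))) t :=
    (hasDerivAt_id t).mul hda
  have h5 : HasDerivAt (fun x : ℝ => x * a x / (2 * Real.sqrt (x ^ 2 + 1)))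
      (((1 * a t + t * (Pfun t * a t / t * (b t - 1 / Pfun t))) * (2 * s)
        - t * a t * (2 * (2 * t / (2 * s)))) / (2 * s) ^ 2) t := by
    exact h4.div h3 (by positivity)
  have h6 := hdb.sub h5
  have hDval := hD.unique h6
  have hA : a t = 2 * s * b t / t := by
    rw [heq]; field_simp
  have hP : Pfun t = c * q / r := rfl
  have hQ : Qfun t = t / (t ^ 2 + 1) := rfl
  rw [hP, hQ] at hDval
  have key := spin7_key_algebra t (b t) (a t) s q r c ht hs hq hr hc hs2 hq2 hr2 hc2 hA
  have hDfin : D = c * ((b t) ^ 2 * t ^ 2 + (b t) ^ 2 + 1) / (t * q * r) := by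
    rw [hDval]; exact key
  refine ⟨hDfin, ?_⟩
  rw [hDfin]
  positivity
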